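/- (OR-gadget) Suppose s, s', t₁, t₁', t₂, t₂', u₁₂, u₁'₂, u₁₂', u₁'₂' are states in a pLTS, and the only transitions outgoing from s, s', u₁₂, u₁'₂, u₁₂', u₁'₂' are: s –a→ u₁₂ | u₁'₂', s' –a→ u₁₂' | u₁'₂, u₁₂ –a→ t₁ | t₂, u₁'₂' –a→ t₁' | t₂', u₁₂' –a→ t₁ | t₂', u₁'₂ –a→ t₁' | t₂. Then s ∼ s' if and only if (t₁ ∼ t₁' or t₂ ∼ t₂'). -/

import Mathlib

open scoped ENNReal

noncomputable section

/-- A probabilistic labelled transition system (pLTS): states `S`, alphabet `A`,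
and a transition relation into probability distributions (`PMF`s) on `S`. -/
structure PLTS (S : Type) (A : Type) where
  Tr : S → A → PMF S → Prop

namespace PLTS

variable {S A : Type}

/-- The mass that a distribution assigns to a set of states. -/
def mass (d : PMF S) (E : Set S) : ℝ≥0∞ := ∑' s : E, d s

/-- Two distributions are `r`-equivalent if they assign equal mass to every
`r`-equivalence class (for an equivalence `r`, the classes are the sets `{t | r s t}`). -/
def REquiv (r : S → S → Prop) (d d' : PMF S) : Prop :=
  ∀ s : S, mass d {t | r s t} = mass d' {t | r s t}

/-- An equivalence relation is a bisimulation if related states can match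
each other's transitions with `r`-equivalent target distributions. -/
def IsBisimulation (L : PLTS S A) (r : S → S → Prop) : Prop :=
  Equivalence r ∧
    ∀ s t, r s t → ∀ a d, L.Tr s a d → ∃ d', L.Tr t a d' ∧ REquiv r d d'

/-- Bisimilarity: the union of all bisimulation relations. -/
def Bisim (L : PLTS S A) (s t : S) : Prop :=
  ∃ r, L.IsBisimulation r ∧ r s t

/-- The bisimulation approximants `∼ₙ`. -/
def approx (L : PLTS S A) : ℕ → S → S → Prop
  | 0 => fun _ _ => True
  | n + 1 => fun s t =>
      (∀ a d, L.Tr s a d → ∃ d', L.Tr t a d' ∧ REquiv (L.approx n) d d') ∧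
      (∀ a d', L.Tr t a d' → ∃ d, L.Tr s a d ∧ REquiv (L.approx n) d d')

/-- A pLTS is finitely branching if every state has finitely many transitions. -/
def FinBranching (L : PLTS S A) : Prop :=
  ∀ s, {p : A × PMF S | L.Tr s p.1 p.2}.Finite

/-- One-step successor relation: `s → s'` iff some transition of `s` gives `s'`
positive probability. -/
def Step (L : PLTS S A) (s s' : S) : Prop :=
  ∃ a d, L.Tr s a d ∧ d s' ≠ 0

end PLTS

namespace PLTS

variable {S A : Type}

/-- `d` is the distribution `x | y`: two distinct points each of probability 1/2. -/
def TwoHalf (d : PMF S) (x y : S) : Prop :=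
  x ≠ y ∧ d x = 1 / 2 ∧ d y = 1 / 2

/-- The only transition outgoing from `s` is `s –a→ d`. -/
def OnlyTr (L : PLTS S A) (s : S) (a : A) (d : PMF S) : Prop :=
  L.Tr s a d ∧ ∀ b e, L.Tr s b e → b = a ∧ e = d

end PLTS


namespace PLTS

variable {S A : Type}

open Classical in
lemma tsum_subtype_ite (E : Set S) (c : S) (v : ℝ≥0∞) :
    (∑' s : E, if (s : S) = c then v else 0) = if c ∈ E then v else 0 := by
  classical
  refine (tsum_subtype E fun t => if t = c then v else 0).trans ?_
  have h : E.indicator (fun s => if s = c then v else 0)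
      = fun s => if s = c then (if c ∈ E then v else 0) else 0 := by
    funext s
    by_cases hs : s = c
    · subst hs; by_cases hE : s ∈ E <;> simp [Set.indicator, hE]
    · simp [Set.indicator, hs]
  rw [h, tsum_ite_eq]

lemma TwoHalf.symm {d : PMF S} {x y : S} (h : TwoHalf d x y) : TwoHalf d y x :=
  ⟨h.1.symm, h.2.2, h.2.1⟩

lemma TwoHalf.apply_eq_zero {d : PMF S} {x y z : S} (h : TwoHalf d x y)
    (hx : z ≠ x) (hy : z ≠ y) : d z = 0 := by
  classical
  have hxm : x ∉ ({y, z} : Finset S) := by simp [h.1, Ne.symm hx]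
  have hym : y ∉ ({z} : Finset S) := by simp [Ne.symm hy]
  have hsum : d x + (d y + d z) ≤ 1 := by
    have hle : ∑ w ∈ ({x, y, z} : Finset S), d w ≤ ∑' w, d w :=
      Summable.sum_le_tsum _ (fun _ _ => zero_le) ENNReal.summable
    rw [d.tsum_coe] at hle
    rwa [Finset.sum_insert hxm, Finset.sum_insert hym, Finset.sum_singleton] at hle
  rw [h.2.1, h.2.2, ← add_assoc, ENNReal.add_halves] at hsum
  have := ENNReal.le_of_add_le_add_left (by norm_num : (1:ℝ≥0∞) ≠ ⊤)
    (le_trans hsum (by simp : (1:ℝ≥0∞) ≤ 1 + 0))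
  simpa using this

open Classical in
lemma TwoHalf.mass_eq {d : PMF S} {x y : S} (h : TwoHalf d x y) (E : Set S) :
    mass d E = (if x ∈ E then (1/2 : ℝ≥0∞) else 0) + (if y ∈ E then (1/2 : ℝ≥0∞) else 0) := by
  classical
  have hd : ∀ s, d s = (if s = x then (1/2 : ℝ≥0∞) else 0) + (if s = y then (1/2 : ℝ≥0∞) else 0) := by
    intro s
    by_cases hx : s = x
    · subst hx; simp [h.2.1, h.1]
    · by_cases hy : s = y
      · subst hy; simp [h.2.2, hx]
      · simp [hx, hy, h.apply_eq_zero hx hy]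
  unfold mass
  calc ∑' s : E, d s
      = ∑' s : E, ((if (s : S) = x then (1/2 : ℝ≥0∞) else 0)
          + (if (s : S) = y then (1/2 : ℝ≥0∞) else 0)) := tsum_congr fun s => hd s
    _ = (∑' s : E, if (s : S) = x then (1/2 : ℝ≥0∞) else 0)
          + ∑' s : E, if (s : S) = y then (1/2 : ℝ≥0∞) else 0 := ENNReal.tsum_add
    _ = _ := by rw [tsum_subtype_ite, tsum_subtype_ite]

lemma requiv_cases {r : S → S → Prop} (hr : Equivalence r) {d d' : PMF S} {x y x' y' : S}
    (hd : TwoHalf d x y) (hd' : TwoHalf d' x' y') (h : REquiv r d d') :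
    r x x' ∨ r x y' := by
  classical
  by_contra hc
  push_neg at hc
  have h1 := h x
  rw [hd.mass_eq, hd'.mass_eq] at h1
  simp only [Set.mem_setOf_eq] at h1
  rw [if_pos (hr.refl x), if_neg hc.1, if_neg hc.2, add_zero] at h1
  have h2 := (add_eq_zero.mp h1).1
  norm_num at h2

lemma requiv_mono {r₀ r : S → S → Prop} (h₀ : Equivalence r₀) (hr : Equivalence r)
    (hsub : ∀ x y, r₀ x y → r x y) {d d' : PMF S} (h : REquiv r₀ d d') : REquiv r d d' := by
  intro s₀
  set E : Set S := {t | r s₀ t} with hE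
  letI sd : Setoid S := ⟨r₀, h₀⟩
  have hfib : ∀ p : Quotient sd, {t | r₀ (Quotient.out p) t} = {t | Quotient.mk sd t = p} := by
    intro p
    ext t
    simp only [Set.mem_setOf_eq]
    constructor
    · intro ht; rw [← Quotient.out_eq p]; exact (Quotient.sound ht).symm
    · intro ht; exact Quotient.exact ((Quotient.out_eq p).trans ht.symm)
  have key : ∀ e : PMF S,
      mass e E = ∑' p : Quotient sd, mass e (E ∩ {t | r₀ (Quotient.out p) t}) := by
    intro e
    rw [mass, tsum_subtype E (fun t => e t),
      ← (Equiv.sigmaFiberEquiv (Quotient.mk sd)).tsum_eq (E.indicator (fun t => e t)),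
      ENNReal.tsum_sigma']
    refine tsum_congr fun p => ?_
    calc ∑' (b : {x // Quotient.mk sd x = p}),
          E.indicator (fun t => e t) ((Equiv.sigmaFiberEquiv (Quotient.mk sd)) ⟨p, b⟩)
        = ∑' (b : {x // Quotient.mk sd x = p}),
            (E ∩ {t | r₀ (Quotient.out p) t}).indicator (fun t => e t) b.1 := by
          refine tsum_congr fun b => ?_
          have hb : b.1 ∈ {t | r₀ (Quotient.out p) t} := by rw [hfib]; exact b.2
          by_cases hEb : b.1 ∈ E
          · simp [Equiv.sigmaFiberEquiv, Set.indicator, hEb, hb]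
          · simp [Equiv.sigmaFiberEquiv, Set.indicator, hEb]
      _ = ∑' t, (E ∩ {t | r₀ (Quotient.out p) t}).indicator (fun t => e t) t := by
          refine tsum_subtype_eq_of_support_subset ?_
          refine Set.support_indicator_subset.trans ?_
          intro t ht
          have h2 := ht.2
          rw [hfib] at h2
          exact h2
      _ = mass e (E ∩ {t | r₀ (Quotient.out p) t}) := by rw [mass, tsum_subtype]
  rw [key d, key d']
  refine tsum_congr fun p => ?_
  by_cases hp : Quotient.out p ∈ E
  · have hsub2 : E ∩ {t | r₀ (Quotient.out p) t} = {t | r₀ (Quotient.out p) t} := by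
      apply Set.inter_eq_self_of_subset_right
      intro t ht
      exact hr.trans hp (hsub _ _ ht)
    rw [hsub2]
    exact h (Quotient.out p)
  · have hempty : E ∩ {t | r₀ (Quotient.out p) t} = ∅ := by
      ext t
      simp only [Set.mem_inter_iff, Set.mem_setOf_eq, Set.mem_empty_iff_false, iff_false, not_and]
      intro htE htC
      exact hp (hr.trans htE (hr.symm (hsub _ _ htC)))
    rw [hempty]
    simp [mass]

/-- One-sided matching of transitions up to `REquiv r`. -/
def Match (L : PLTS S A) (r : S → S → Prop) (p q : S) : Prop :=
  ∀ a d, L.Tr p a d → ∃ d', L.Tr q a d' ∧ REquiv r d d'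

lemma closure_isBisimulation (L : PLTS S A) {r₀ ex : S → S → Prop}
    (h₀ : L.IsBisimulation r₀)
    (hex : ∀ p q, ex p q →
      Match L (Relation.EqvGen fun x y => r₀ x y ∨ ex x y) p q ∧
      Match L (Relation.EqvGen fun x y => r₀ x y ∨ ex x y) q p) :
    L.IsBisimulation (Relation.EqvGen fun x y => r₀ x y ∨ ex x y) := by
  set r := Relation.EqvGen (fun x y => r₀ x y ∨ ex x y) with hrdef
  have hre : Equivalence r := Relation.EqvGen.is_equivalence _
  have hsub : ∀ x y, r₀ x y → r x y := fun x y h => Relation.EqvGen.rel _ _ (Or.inl h)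
  refine ⟨hre, ?_⟩
  have main : ∀ p q, r p q → Match L r p q ∧ Match L r q p := by
    intro p q hpq
    induction hpq with
    | rel p q h =>
      rcases h with h | h
      · constructor
        · intro a d hd
          obtain ⟨d', hd', he⟩ := h₀.2 p q h a d hd
          exact ⟨d', hd', requiv_mono h₀.1 hre hsub he⟩
        · intro a d hd
          obtain ⟨d', hd', he⟩ := h₀.2 q p (h₀.1.symm h) a d hd
          exact ⟨d', hd', requiv_mono h₀.1 hre hsub he⟩
      · exact hex p q h
    | refl p => exact ⟨fun a d hd => ⟨d, hd, fun _ => rfl⟩, fun a d hd => ⟨d, hd, fun _ => rfl⟩⟩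
    | symm p q h ih => exact ⟨ih.2, ih.1⟩
    | trans p q w h1 h2 ih1 ih2 =>
      constructor
      · intro a d hd
        obtain ⟨d', hd', he⟩ := ih1.1 a d hd
        obtain ⟨d'', hd'', he'⟩ := ih2.1 a d' hd'
        exact ⟨d'', hd'', fun s => (he s).trans (he' s)⟩
      · intro a d hd
        obtain ⟨d', hd', he⟩ := ih2.2 a d hd
        obtain ⟨d'', hd'', he'⟩ := ih1.2 a d' hd'
        exact ⟨d'', hd'', fun s => (he s).trans (he' s)⟩
  exact fun s t hst => (main s t hst).1

end PLTS

/-- **OR-gadget.** If the only transitions from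
`s, s', u₁₂, u₁'₂', u₁₂', u₁'₂` are
`s –a→ u₁₂ | u₁'₂'`, `s' –a→ u₁₂' | u₁'₂`, `u₁₂ –a→ t₁ | t₂`,
`u₁'₂' –a→ t₁' | t₂'`, `u₁₂' –a→ t₁ | t₂'`, `u₁'₂ –a→ t₁' | t₂`, then
`s ∼ s'` iff (`t₁ ∼ t₁'` or `t₂ ∼ t₂'`). -/
theorem or_gadget (S A : Type) [Countable S] (L : PLTS S A) (a : A)
    (s s' t₁ t₁' t₂ t₂' u₁₂ u₁'₂ u₁₂' u₁'₂' : S)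
    (ds ds' d₁₂ d₁'₂' d₁₂' d₁'₂ : PMF S)
    (hds : PLTS.TwoHalf ds u₁₂ u₁'₂') (hds' : PLTS.TwoHalf ds' u₁₂' u₁'₂)
    (hd₁₂ : PLTS.TwoHalf d₁₂ t₁ t₂) (hd₁'₂' : PLTS.TwoHalf d₁'₂' t₁' t₂')
    (hd₁₂' : PLTS.TwoHalf d₁₂' t₁ t₂') (hd₁'₂ : PLTS.TwoHalf d₁'₂ t₁' t₂)
    (hs : L.OnlyTr s a ds) (hs' : L.OnlyTr s' a ds')
    (hu₁₂ : L.OnlyTr u₁₂ a d₁₂) (hu₁'₂' : L.OnlyTr u₁'₂' a d₁'₂')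
    (hu₁₂' : L.OnlyTr u₁₂' a d₁₂') (hu₁'₂ : L.OnlyTr u₁'₂ a d₁'₂) :
    L.Bisim s s' ↔ (L.Bisim t₁ t₁' ∨ L.Bisim t₂ t₂') := by
  constructor
  · rintro ⟨r, hbis, hss'⟩
    have hre := hbis.1
    obtain ⟨d', hTr', hReq⟩ := hbis.2 s s' hss' a ds hs.1
    obtain ⟨-, hd'⟩ := hs'.2 a d' hTr'
    subst hd'
    have step : ∀ {u u' : S} {e e' : PMF S}, L.OnlyTr u a e → L.OnlyTr u' a e' → r u u' →
        PLTS.REquiv r e e' := by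
      intro u u' e e' hu hu' huu
      obtain ⟨f, hf, hfe⟩ := hbis.2 u u' huu a e hu.1
      obtain ⟨-, rfl⟩ := hu'.2 a f hf
      exact hfe
    rcases PLTS.requiv_cases hre hds hds' hReq with hc | hc
    · have he := step hu₁₂ hu₁₂' hc
      rcases PLTS.requiv_cases hre hd₁₂.symm hd₁₂' he with h2 | h2
      · rcases PLTS.requiv_cases hre hd₁₂'.symm hd₁₂ (fun s₀ => (he s₀).symm) with h3 | h3
        · exact Or.inr ⟨r, hbis, hre.trans h2 (hre.symm h3)⟩
        · exact Or.inr ⟨r, hbis, hre.symm h3⟩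
      · exact Or.inr ⟨r, hbis, h2⟩
    · have he := step hu₁₂ hu₁'₂ hc
      rcases PLTS.requiv_cases hre hd₁₂ hd₁'₂ he with h2 | h2
      · exact Or.inl ⟨r, hbis, h2⟩
      · rcases PLTS.requiv_cases hre hd₁'₂ hd₁₂ (fun s₀ => (he s₀).symm) with h3 | h3
        · exact Or.inl ⟨r, hbis, hre.symm h3⟩
        · exact Or.inl ⟨r, hbis, hre.trans h2 (hre.symm h3)⟩
  · rintro (⟨r₀, h₀, ht⟩ | ⟨r₀, h₀, ht⟩)
    · set ex : S → S → Prop := fun x y =>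
        (x = s ∧ y = s') ∨ (x = u₁₂ ∧ y = u₁'₂) ∨ (x = u₁'₂' ∧ y = u₁₂') with hexdef
      set r := Relation.EqvGen (fun x y => r₀ x y ∨ ex x y) with hrdef
      have hre : Equivalence r := Relation.EqvGen.is_equivalence _
      have hmem : ∀ {x y : S}, ex x y → r x y := fun h => Relation.EqvGen.rel _ _ (Or.inr h)
      have h11' : r t₁ t₁' := Relation.EqvGen.rel _ _ (Or.inl ht)
      have hu1 : r u₁₂ u₁'₂ := hmem (Or.inr (Or.inl ⟨rfl, rfl⟩))
      have hu2 : r u₁'₂' u₁₂' := hmem (Or.inr (Or.inr ⟨rfl, rfl⟩))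
      have hclass : ∀ {s₀ x y : S}, r x y → ((x ∈ {t | r s₀ t}) = (y ∈ {t | r s₀ t})) :=
        fun h => propext ⟨fun hx => hre.trans hx h, fun hy => hre.trans hy (hre.symm h)⟩
      have hreq : ∀ {d d' : PMF S} {x y x' y' : S}, PLTS.TwoHalf d x y → PLTS.TwoHalf d' x' y' →
          r x x' → r y y' → PLTS.REquiv r d d' := by
        intro d d' x y x' y' hd hd' h1 h2 s₀
        rw [hd.mass_eq, hd'.mass_eq, hclass h1, hclass h2]
      have hbis : L.IsBisimulation r := by
        refine PLTS.closure_isBisimulation L h₀ ?_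
        rintro p q (⟨rfl, rfl⟩ | ⟨rfl, rfl⟩ | ⟨rfl, rfl⟩)
        · constructor
          · intro b d hd
            obtain ⟨rfl, rfl⟩ := hs.2 b d hd
            exact ⟨ds', hs'.1, hreq hds hds'.symm hu1 hu2⟩
          · intro b d hd
            obtain ⟨rfl, rfl⟩ := hs'.2 b d hd
            exact ⟨ds, hs.1, hreq hds'.symm hds (hre.symm hu1) (hre.symm hu2)⟩
        · constructor
          · intro b d hd
            obtain ⟨rfl, rfl⟩ := hu₁₂.2 b d hd
            exact ⟨d₁'₂, hu₁'₂.1, hreq hd₁₂ hd₁'₂ h11' (hre.refl t₂)⟩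
          · intro b d hd
            obtain ⟨rfl, rfl⟩ := hu₁'₂.2 b d hd
            exact ⟨d₁₂, hu₁₂.1, hreq hd₁'₂ hd₁₂ (hre.symm h11') (hre.refl t₂)⟩
        · constructor
          · intro b d hd
            obtain ⟨rfl, rfl⟩ := hu₁'₂'.2 b d hd
            exact ⟨d₁₂', hu₁₂'.1, hreq hd₁'₂' hd₁₂' (hre.symm h11') (hre.refl t₂')⟩
          · intro b d hd
            obtain ⟨rfl, rfl⟩ := hu₁₂'.2 b d hd
            exact ⟨d₁'₂', hu₁'₂'.1, hreq hd₁₂' hd₁'₂' h11' (hre.refl t₂')⟩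
      exact ⟨r, hbis, hmem (Or.inl ⟨rfl, rfl⟩)⟩
    · set ex : S → S → Prop := fun x y =>
        (x = s ∧ y = s') ∨ (x = u₁₂ ∧ y = u₁₂') ∨ (x = u₁'₂' ∧ y = u₁'₂) with hexdef
      set r := Relation.EqvGen (fun x y => r₀ x y ∨ ex x y) with hrdef
      have hre : Equivalence r := Relation.EqvGen.is_equivalence _
      have hmem : ∀ {x y : S}, ex x y → r x y := fun h => Relation.EqvGen.rel _ _ (Or.inr h)
      have h22' : r t₂ t₂' := Relation.EqvGen.rel _ _ (Or.inl ht)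
      have hu1 : r u₁₂ u₁₂' := hmem (Or.inr (Or.inl ⟨rfl, rfl⟩))
      have hu2 : r u₁'₂' u₁'₂ := hmem (Or.inr (Or.inr ⟨rfl, rfl⟩))
      have hclass : ∀ {s₀ x y : S}, r x y → ((x ∈ {t | r s₀ t}) = (y ∈ {t | r s₀ t})) :=
        fun h => propext ⟨fun hx => hre.trans hx h, fun hy => hre.trans hy (hre.symm h)⟩
      have hreq : ∀ {d d' : PMF S} {x y x' y' : S}, PLTS.TwoHalf d x y → PLTS.TwoHalf d' x' y' →
          r x x' → r y y' → PLTS.REquiv r d d' := by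
        intro d d' x y x' y' hd hd' h1 h2 s₀
        rw [hd.mass_eq, hd'.mass_eq, hclass h1, hclass h2]
      have hbis : L.IsBisimulation r := by
        refine PLTS.closure_isBisimulation L h₀ ?_
        rintro p q (⟨rfl, rfl⟩ | ⟨rfl, rfl⟩ | ⟨rfl, rfl⟩)
        · constructor
          · intro b d hd
            obtain ⟨rfl, rfl⟩ := hs.2 b d hd
            exact ⟨ds', hs'.1, hreq hds hds' hu1 hu2⟩
          · intro b d hd
            obtain ⟨rfl, rfl⟩ := hs'.2 b d hd
            exact ⟨ds, hs.1, hreq hds' hds (hre.symm hu1) (hre.symm hu2)⟩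
        · constructor
          · intro b d hd
            obtain ⟨rfl, rfl⟩ := hu₁₂.2 b d hd
            exact ⟨d₁₂', hu₁₂'.1, hreq hd₁₂ hd₁₂' (hre.refl t₁) h22'⟩
          · intro b d hd
            obtain ⟨rfl, rfl⟩ := hu₁₂'.2 b d hd
            exact ⟨d₁₂, hu₁₂.1, hreq hd₁₂' hd₁₂ (hre.refl t₁) (hre.symm h22')⟩
        · constructor
          · intro b d hd
            obtain ⟨rfl, rfl⟩ := hu₁'₂'.2 b d hd
            exact ⟨d₁'₂, hu₁'₂.1, hreq hd₁'₂' hd₁'₂ (hre.refl t₁') (hre.symm h22')⟩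
          · intro b d hd
            obtain ⟨rfl, rfl⟩ := hu₁'₂.2 b d hd
            exact ⟨d₁'₂', hu₁'₂'.1, hreq hd₁'₂ hd₁'₂' (hre.refl t₁') h22'⟩
      exact ⟨r, hbis, hmem (Or.inl ⟨rfl, rfl⟩)⟩
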